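/- arXiv:2509.13231 — 3 statements merged into one kernel-verified Lean document; each statement's English description precedes it below -/
import Mathlib

section
/- Let 𝔪 be a nonempty symmetric multisegment in the bad-parity setting with initial sequence Δ₁ ≥ … ≥ Δ_l, and assume there exist i, j ∈ {1,…,l} with Δ_i∨ = Δ_j. Set i₀ = min{i ∈ {1,…,l} : ∃ j ∈ {1,…,l}, Δ_i∨ = Δ_j} and j₀ = max{j ∈ {1,…,l} : ∃ i ∈ {1,…,l}, Δ_j∨ = Δ_i}. Then: (1) Δ_{i₀}∨ = Δ_{j₀}; (2) for i, j ∈ {1,…,l}, Δ_i∨ = Δ_j if and only if i₀ ≤ i ≤ j₀ and i + j = i₀ + j₀; (3) for all i with i₀ ≤ i ≤ j₀, ℓ(Δ_i) = ℓ(Δ_{i₀}). -/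
namespace AZ

/-- A segment in doubled coordinates: the pair `(a, b)` represents the segment
`[a/2, b/2]` whose endpoints lie in `(1/2)ℤ`.  Thus the end `e(Δ)` is `Δ.2 / 2`,
the beginning `b(Δ)` is `Δ.1 / 2`, and `Δ` is centered iff `Δ.1 + Δ.2 = 0`. -/
abbrev Seg := ℤ × ℤ

namespace Seg

/-- Well-formedness of a segment: `a ≤ b` and `a ≡ b [ZMOD 2]`, i.e. `b - a ∈ 2ℕ`. -/
def WF (Δ : Seg) : Prop := Δ.1 ≤ Δ.2 ∧ Δ.1 % 2 = Δ.2 % 2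

/-- The dual (contragredient) segment `Δ∨ = [−b, −a]`. -/
def dual (Δ : Seg) : Seg := (-Δ.2, -Δ.1)

/-- `Δ⁻` : the segment with its end removed. -/
def trimEnd (Δ : Seg) : Seg := (Δ.1, Δ.2 - 2)

/-- `⁻Δ` : the segment with its beginning removed. -/
def trimBeg (Δ : Seg) : Seg := (Δ.1 + 2, Δ.2)

/-- `⁺Δ` : the segment with its beginning extended. -/
def extBeg (Δ : Seg) : Seg := (Δ.1 - 2, Δ.2)

/-- The order on segments: `[x₁,y₁] ≤ [x₂,y₂]` iff `x₁ < x₂`, or `x₁ = x₂` and `y₁ ≥ y₂`. -/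
def le (Δ₁ Δ₂ : Seg) : Prop := Δ₁.1 < Δ₂.1 ∨ (Δ₁.1 = Δ₂.1 ∧ Δ₂.2 ≤ Δ₁.2)

end Seg

/-- The condition for `next` to be a successor of `Δ j` in the bad-parity initial
sequence: `next ∈ m`, `next ≤ Δ j`, `e(next) = e(Δ j) − 1`, and if the dual of `next`
already occurs among `Δ 1, …, Δ j`, then `next` has multiplicity at least `2` in `m`. -/
def SuccBad (m : Multiset Seg) (Δ : ℕ → Seg) (j : ℕ) (next : Seg) : Prop :=
  next ∈ m ∧ Seg.le next (Δ j) ∧ next.2 = (Δ j).2 - 2 ∧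
    ((∃ i, 1 ≤ i ∧ i ≤ j ∧ Seg.dual next = Δ i) → 2 ≤ m.count next)

/-- `Δ 1, …, Δ l` is the initial sequence in the bad-parity algorithm for `m`. -/
structure IsInitSeqBad (m : Multiset Seg) (Δ : ℕ → Seg) (l : ℕ) : Prop where
  one_le : 1 ≤ l
  first_mem : Δ 1 ∈ m
  first_max_end : ∀ Λ ∈ m, Λ.2 ≤ (Δ 1).2
  first_max : ∀ Λ ∈ m, Λ.2 = (Δ 1).2 → Seg.le Λ (Δ 1)
  succ : ∀ j, 1 ≤ j → j < l → SuccBad m Δ j (Δ (j + 1))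
  succ_max : ∀ j, 1 ≤ j → j < l → ∀ Λ, SuccBad m Δ j Λ → Seg.le Λ (Δ (j + 1))
  last : ∀ Λ, ¬ SuccBad m Δ l Λ

/-- The multisegment `𝔪₁ = [e(Δ_l), e(Δ₁)] + [−e(Δ₁), −e(Δ_l)]`. -/
def mOneBad (Δ : ℕ → Seg) (l : ℕ) : Multiset Seg :=
  {((Δ l).2, (Δ 1).2), (-(Δ 1).2, -(Δ l).2)}

/-- The multiset of segments of an initial sequence. -/
def seqM (Δ : ℕ → Seg) (l : ℕ) : Multiset Seg := (Finset.Icc 1 l).val.map Δ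

/-- The multisegment `𝔪#` : remove one copy of each `Δ i` and each `Δ i∨`, insert
`Δ i⁻` and `⁻(Δ i∨)` and discard empty segments. -/
def mHashBad (m : Multiset Seg) (Δ : ℕ → Seg) (l : ℕ) : Multiset Seg :=
  (m - (seqM Δ l + (seqM Δ l).map Seg.dual)) +
    ((seqM Δ l).map Seg.trimEnd +
        (seqM Δ l).map (fun Δ0 => Seg.dual (Seg.trimEnd Δ0))).filter
      fun Δ0 => Δ0.1 ≤ Δ0.2

/-- The bad-parity duality algorithm `AD`, as a relation: `AD(0) = 0` and
`AD(𝔪) = 𝔪₁ + AD(𝔪#)`. -/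
inductive IsADBad : Multiset Seg → Multiset Seg → Prop
  | zero : IsADBad 0 0
  | step {m : Multiset Seg} {Δ : ℕ → Seg} {l : ℕ} {d : Multiset Seg}
      (hm : m ≠ 0) (hseq : IsInitSeqBad m Δ l) (hrec : IsADBad (mHashBad m Δ l) d) :
      IsADBad m (mOneBad Δ l + d)

/-- A valid symmetric multisegment in the bad-parity setting: every centered segment
has even multiplicity. -/
structure BadInput (m : Multiset Seg) : Prop where
  wf : ∀ Δ0 ∈ m, Seg.WF Δ0
  symm : m.map Seg.dual = m
  parity : ∀ Δ₁ ∈ m, ∀ Δ₂ ∈ m, Δ₁.2 % 2 = Δ₂.2 % 2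
  evenCentered : ∀ Δ0 : Seg, Δ0.1 + Δ0.2 = 0 → Even (m.count Δ0)

/-- Index `i ∈ {1, …, l}` whose segment's dual also occurs in the initial sequence. -/
def HasDualPair (Δ : ℕ → Seg) (l i : ℕ) : Prop :=
  1 ≤ i ∧ i ≤ l ∧ ∃ j, 1 ≤ j ∧ j ≤ l ∧ Seg.dual (Δ i) = Δ j

/-- `i₀ = min{i ∈ {1,…,l} : ∃ j ∈ {1,…,l}, Δ i∨ = Δ j}`. -/
def IsMinDual (Δ : ℕ → Seg) (l i₀ : ℕ) : Prop :=
  HasDualPair Δ l i₀ ∧ ∀ i, HasDualPair Δ l i → i₀ ≤ i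

/-- `j₀ = max{j ∈ {1,…,l} : ∃ i ∈ {1,…,l}, Δ j∨ = Δ i}`. -/
def IsMaxDual (Δ : ℕ → Seg) (l j₀ : ℕ) : Prop :=
  HasDualPair Δ l j₀ ∧ ∀ j, HasDualPair Δ l j → j ≤ j₀

section Aux

variable {m : Multiset Seg} {Δ : ℕ → Seg} {l : ℕ}

lemma seq_mem (hseq : IsInitSeqBad m Δ l) : ∀ k, 1 ≤ k → k ≤ l → Δ k ∈ m := by
  intro k hk1 hkl
  match k, hk1 with
  | 1, _ => exact hseq.first_mem
  | (n+2), _ => exact (hseq.succ (n+1) (by omega) (by omega)).1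

lemma dual_dual (s : Seg) : Seg.dual (Seg.dual s) = s := by
  simp [Seg.dual]

lemma e_add (hseq : IsInitSeqBad m Δ l) :
    ∀ i d, 1 ≤ i → i + d ≤ l → (Δ (i + d)).2 = (Δ i).2 - 2 * (d : ℤ) := by
  intro i d hi
  induction d with
  | zero => simp
  | succ n ih =>
    intro h
    have h1 := (hseq.succ (i + n) (by omega) (by omega)).2.2.1
    have h2 := ih (by omega)
    have : i + (n + 1) = (i + n) + 1 := by omega
    rw [this, h1, h2]
    push_cast
    ring

lemma e_between (hseq : IsInitSeqBad m Δ l) {i j : ℕ} (h1 : 1 ≤ i) (h2 : i ≤ j)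
    (h3 : j ≤ l) : (Δ j).2 = (Δ i).2 - 2 * ((j : ℤ) - (i : ℤ)) := by
  obtain ⟨d, rfl⟩ := Nat.exists_eq_add_of_le h2
  have := e_add hseq i d h1 h3
  push_cast
  omega

lemma seq_inj (hseq : IsInitSeqBad m Δ l) {i j : ℕ} (h1 : 1 ≤ i) (h2 : i ≤ l)
    (h3 : 1 ≤ j) (h4 : j ≤ l) (h : (Δ i).2 = (Δ j).2) : i = j := by
  have e1 := e_between hseq (le_refl 1) h1 h2
  have e2 := e_between hseq (le_refl 1) h3 h4
  omega

lemma a_parity (hbad : BadInput m) (hseq : IsInitSeqBad m Δ l) {k : ℕ}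
    (h1 : 1 ≤ k) (h2 : k ≤ l) : (Δ k).1 % 2 = (Δ 1).2 % 2 := by
  have hk := seq_mem hseq k h1 h2
  have hw := (hbad.wf _ hk).2
  have hp := hbad.parity _ hk _ hseq.first_mem
  omega

lemma a_step (hbad : BadInput m) (hseq : IsInitSeqBad m Δ l) {k : ℕ}
    (h1 : 1 ≤ k) (h2 : k < l) : (Δ (k + 1)).1 ≤ (Δ k).1 - 2 := by
  have hle := (hseq.succ k h1 h2).2.1
  have he := (hseq.succ k h1 h2).2.2.1
  have p1 := a_parity hbad hseq (k := k + 1) (by omega) (by omega)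
  have p2 := a_parity hbad hseq h1 (le_of_lt h2)
  rcases hle with h | ⟨h, h'⟩
  · omega
  · omega

lemma a_add (hbad : BadInput m) (hseq : IsInitSeqBad m Δ l) :
    ∀ i d, 1 ≤ i → i + d ≤ l → (Δ (i + d)).1 ≤ (Δ i).1 - 2 * (d : ℤ) := by
  intro i d hi
  induction d with
  | zero => simp
  | succ n ih =>
    intro h
    have h1 := a_step hbad hseq (k := i + n) (by omega) (by omega)
    have h2 := ih (by omega)
    have h3 : i + (n + 1) = (i + n) + 1 := by omega
    rw [h3]
    push_cast
    omega

lemma a_between (hbad : BadInput m) (hseq : IsInitSeqBad m Δ l) {i j : ℕ}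
    (h1 : 1 ≤ i) (h2 : i ≤ j) (h3 : j ≤ l) :
    (Δ j).1 ≤ (Δ i).1 - 2 * ((j : ℤ) - (i : ℤ)) := by
  obtain ⟨d, rfl⟩ := Nat.exists_eq_add_of_le h2
  have := a_add hbad hseq i d h1 h3
  push_cast
  omega

lemma pair_a (hbad : BadInput m) (hseq : IsInitSeqBad m Δ l) {i j : ℕ}
    (h1 : 1 ≤ i) (hij : i ≤ j) (hj : j ≤ l) (hd : Seg.dual (Δ i) = Δ j) :
    ∀ k, i ≤ k → k ≤ j →
      (Δ k).1 = (Δ i).1 - 2 * ((k : ℤ) - (i : ℤ)) ∧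
      (Δ k).2 = (Δ i).2 - 2 * ((k : ℤ) - (i : ℤ)) := by
  have hj1 : (Δ j).1 = -(Δ i).2 := by rw [← hd]; rfl
  have hj2 : (Δ j).2 = -(Δ i).1 := by rw [← hd]; rfl
  have hE := e_between hseq h1 hij hj
  have hA := a_between hbad hseq h1 hij hj
  intro k hk1 hk2
  have hE1 := e_between hseq h1 hk1 (le_trans hk2 hj)
  have hA1 := a_between hbad hseq h1 hk1 (le_trans hk2 hj)
  have hA2 := a_between hbad hseq (le_trans h1 hk1) hk2 hj
  constructor <;> omega

lemma pair_dual (hbad : BadInput m) (hseq : IsInitSeqBad m Δ l) {i j : ℕ}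
    (h1 : 1 ≤ i) (hij : i ≤ j) (hj : j ≤ l) (hd : Seg.dual (Δ i) = Δ j) :
    ∀ k k', i ≤ k → k ≤ j → k + k' = i + j → Seg.dual (Δ k) = Δ k' := by
  intro k k' hk1 hk2 hkk
  have hk'1 : i ≤ k' := by omega
  have hk'2 : k' ≤ j := by omega
  have A := pair_a hbad hseq h1 hij hj hd k hk1 hk2
  have B := pair_a hbad hseq h1 hij hj hd k' hk'1 hk'2
  have C := pair_a hbad hseq h1 hij hj hd j hij (le_refl j)
  have hj1 : (Δ j).1 = -(Δ i).2 := by rw [← hd]; rfl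
  have hj2 : (Δ j).2 = -(Δ i).1 := by rw [← hd]; rfl
  have g1 : -(Δ k).2 = (Δ k').1 := by omega
  have g2 : -(Δ k).1 = (Δ k').2 := by omega
  show ((-(Δ k).2 : ℤ), (-(Δ k).1 : ℤ)) = Δ k'
  rw [g1, g2]

/-- the partner map is strictly decreasing -/
lemma partner_anti (hbad : BadInput m) (hseq : IsInitSeqBad m Δ l)
    {i j i' j' : ℕ} (hi : 1 ≤ i) (hil : i ≤ l) (hj : 1 ≤ j) (hjl : j ≤ l)
    (hi' : 1 ≤ i') (hil' : i' ≤ l) (hj' : 1 ≤ j') (hjl' : j' ≤ l)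
    (hd : Seg.dual (Δ i) = Δ j) (hd' : Seg.dual (Δ i') = Δ j')
    (hlt : i < i') : j' < j := by
  have hj2 : (Δ j).2 = -(Δ i).1 := by rw [← hd]; rfl
  have hj2' : (Δ j').2 = -(Δ i').1 := by rw [← hd']; rfl
  have hA := a_between hbad hseq hi (le_of_lt hlt) hil'
  have e1 := e_between hseq (le_refl 1) hj hjl
  have e2 := e_between hseq (le_refl 1) hj' hjl'
  omega

end Aux

/-- Lemma 7.1.2: properties of the set of dual pairs in the
bad-parity initial sequence. -/
theorem stmt7 (m : Multiset Seg) (hbad : BadInput m) (hne : m ≠ 0)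
    (Δ : ℕ → Seg) (l : ℕ) (hseq : IsInitSeqBad m Δ l)
    (i₀ j₀ : ℕ) (hi₀ : IsMinDual Δ l i₀) (hj₀ : IsMaxDual Δ l j₀) :
    Seg.dual (Δ i₀) = Δ j₀ ∧
      (∀ i j, 1 ≤ i → i ≤ l → 1 ≤ j → j ≤ l →
        (Seg.dual (Δ i) = Δ j ↔ i₀ ≤ i ∧ i ≤ j₀ ∧ i + j = i₀ + j₀)) ∧
      (∀ i, i₀ ≤ i → i ≤ j₀ → (Δ i).2 - (Δ i).1 = (Δ i₀).2 - (Δ i₀).1) := by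
  obtain ⟨⟨hi₀1, hi₀l, p, hp1, hpl, hdp⟩, hmin⟩ := hi₀
  obtain ⟨⟨hj₀1, hj₀l, i₁, hi₁1, hi₁l, hdj⟩, hmax⟩ := hj₀
  -- dual (Δ i₁) = Δ j₀
  have hdi₁ : Seg.dual (Δ i₁) = Δ j₀ := by rw [← hdj, dual_dual]
  have hdpinv : Seg.dual (Δ p) = Δ i₀ := by rw [← hdp, dual_dual]
  -- i₀ ≤ i₁
  have hle1 : i₀ ≤ i₁ := hmin i₁ ⟨hi₁1, hi₁l, j₀, hj₀1, hj₀l, hdi₁⟩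
  -- p ≤ j₀
  have hple : p ≤ j₀ := hmax p ⟨hp1, hpl, i₀, hi₀1, hi₀l, hdpinv⟩
  -- i₀ = i₁
  have heq : i₀ = i₁ := by
    rcases Nat.lt_or_ge i₀ i₁ with h | h
    · exact absurd (partner_anti hbad hseq hi₀1 hi₀l hp1 hpl hi₁1 hi₁l hj₀1 hj₀l
        hdp hdi₁ h) (by omega)
    · omega
  have hd0 : Seg.dual (Δ i₀) = Δ j₀ := by rw [heq]; exact hdi₁
  have hi₀j₀ : i₀ ≤ j₀ := hmax i₀ ⟨hi₀1, hi₀l, p, hp1, hpl, hdp⟩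
  refine ⟨hd0, ?_, ?_⟩
  · intro i j hi1 hil hj1 hjl
    constructor
    · intro hdij
      have hdji : Seg.dual (Δ j) = Δ i := by rw [← hdij, dual_dual]
      have hii : i₀ ≤ i := hmin i ⟨hi1, hil, j, hj1, hjl, hdij⟩
      have hij₀ : i ≤ j₀ := hmax i ⟨hi1, hil, j, hj1, hjl, hdij⟩
      have hji : i₀ ≤ j := hmin j ⟨hj1, hjl, i, hi1, hil, hdji⟩
      have hjj₀ : j ≤ j₀ := hmax j ⟨hj1, hjl, i, hi1, hil, hdji⟩
      refine ⟨hii, hij₀, ?_⟩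
      have hd' := pair_dual hbad hseq hi₀1 hi₀j₀ hj₀l hd0 i (i₀ + j₀ - i)
        hii hij₀ (by omega)
      have : Δ j = Δ (i₀ + j₀ - i) := by rw [← hdij, hd']
      have := seq_inj hseq hj1 hjl (by omega) (by omega)
        (congrArg Prod.snd this)
      omega
    · rintro ⟨h1, h2, h3⟩
      exact pair_dual hbad hseq hi₀1 hi₀j₀ hj₀l hd0 i j h1 h2 (by omega)
  · intro i h1 h2
    have := pair_a hbad hseq hi₀1 hi₀j₀ hj₀l hd0 i h1 h2
    omega

end AZ
end

section
/- Let 𝔪 be a nonempty symmetric multisegment in the bad-parity setting with initial sequence Δ₁ ≥ … ≥ Δ_l, and assume there exist i, j ∈ {1,…,l} with Δ_i∨ = Δ_j; set i₀ = min{i : ∃ j, Δ_i∨ = Δ_j} and j₀ = max{j : ∃ i, Δ_j∨ = Δ_i}. Suppose 𝔪# is nonempty, e(Δ₁) = e(Δ'₁), l' ≥ i₀, and ⁺Δ'_{i₀} = Δ_{i₀}. Then l' ≥ j₀ and, for all i with i₀ ≤ i ≤ j₀, ⁺Δ'_i = Δ_i. -/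
namespace AZ

/-- Basic facts along an initial sequence: membership and the ends formula. -/
private lemma seqFacts {m : Multiset Seg} {Δ : ℕ → Seg} {l : ℕ}
    (h : IsInitSeqBad m Δ l) :
    ∀ j : ℕ, 1 ≤ j → j ≤ l → Δ j ∈ m ∧ (Δ j).2 = (Δ 1).2 - 2 * ((j : ℤ) - 1) := by
  intro j
  induction j with
  | zero => intro h1 _; exact absurd h1 (by omega)
  | succ n ih =>
    intro _ h2
    rcases Nat.eq_zero_or_pos n with hn | hn
    · subst hn
      exact ⟨h.first_mem, by push_cast; ring⟩
    · have hnl : n < l := by omega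
      obtain ⟨_, hend⟩ := ih hn (by omega)
      obtain ⟨hm, _, he, _⟩ := h.succ n hn hnl
      refine ⟨hm, ?_⟩
      rw [he, hend]; push_cast; ring

/-- Beginnings strictly decrease by at least 2 along an initial sequence. -/
private lemma begMono {m : Multiset Seg} {Δ : ℕ → Seg} {l : ℕ}
    (h : IsInitSeqBad m Δ l)
    (hpar : ∀ Λ ∈ m, Λ.1 % 2 = (Δ 1).2 % 2) :
    ∀ j k : ℕ, 1 ≤ j → j ≤ k → k ≤ l → (Δ k).1 ≤ (Δ j).1 - 2 * ((k : ℤ) - (j : ℤ)) := by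
  intro j k
  induction k with
  | zero => intro h1 h2 _; exact absurd (h1.trans h2) (by omega)
  | succ n ih =>
    intro h1 h2 h3
    rcases Nat.eq_or_lt_of_le h2 with he | hlt
    · rw [he]; push_cast; omega
    · have hjn : j ≤ n := by omega
      have hnl : n < l := by omega
      have h1n : 1 ≤ n := by omega
      have ihn := ih h1 hjn (by omega)
      obtain ⟨_, hle, hend, _⟩ := h.succ n h1n hnl
      have hstep : (Δ (n + 1)).1 < (Δ n).1 := by
        rcases hle with hlt' | ⟨_, hge⟩
        · exact hlt'
        · omega
      have hp1 : (Δ (n + 1)).1 % 2 = (Δ 1).2 % 2 :=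
        hpar _ (seqFacts h (n + 1) (by omega) h3).1
      have hp2 : (Δ n).1 % 2 = (Δ 1).2 % 2 :=
        hpar _ (seqFacts h n h1n (by omega)).1
      push_cast
      omega

/-- Every member of `𝔪#` has endpoints of the right parity and is well-formed. -/
private lemma hashWF {m : Multiset Seg} {Δ : ℕ → Seg} {l : ℕ}
    (hbad : BadInput m) (h : IsInitSeqBad m Δ l) :
    ∀ Λ ∈ mHashBad m Δ l,
      Λ.1 % 2 = (Δ 1).2 % 2 ∧ Λ.2 % 2 = (Δ 1).2 % 2 ∧ Λ.1 ≤ Λ.2 := by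
  have hm : ∀ Λ' ∈ m, Λ'.1 % 2 = (Δ 1).2 % 2 ∧ Λ'.2 % 2 = (Δ 1).2 % 2 ∧ Λ'.1 ≤ Λ'.2 := by
    intro Λ' h'
    have hw := hbad.wf Λ' h'
    have hp := hbad.parity Λ' h' (Δ 1) h.first_mem
    exact ⟨by rw [hw.2]; exact hp, hp, hw.1⟩
  intro Λ hΛ
  rw [mHashBad, Multiset.mem_add] at hΛ
  rcases hΛ with hΛ | hΛ
  · exact hm Λ (Multiset.mem_of_le tsub_le_self hΛ)
  · rw [Multiset.mem_filter, Multiset.mem_add] at hΛ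
    obtain ⟨hmem | hmem, hle⟩ := hΛ
    · rw [Multiset.mem_map] at hmem
      obtain ⟨x, hx, rfl⟩ := hmem
      rw [seqM, Multiset.mem_map] at hx
      obtain ⟨a, ha, rfl⟩ := hx
      rw [Finset.mem_val, Finset.mem_Icc] at ha
      obtain ⟨hp1, hp2, _⟩ := hm _ (seqFacts h a ha.1 ha.2).1
      exact ⟨hp1, by simp only [Seg.trimEnd]; omega, hle⟩
    · rw [Multiset.mem_map] at hmem
      obtain ⟨x, hx, rfl⟩ := hmem
      rw [seqM, Multiset.mem_map] at hx
      obtain ⟨a, ha, rfl⟩ := hx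
      rw [Finset.mem_val, Finset.mem_Icc] at ha
      obtain ⟨hp1, hp2, _⟩ := hm _ (seqFacts h a ha.1 ha.2).1
      refine ⟨?_, ?_, hle⟩ <;> simp only [Seg.dual, Seg.trimEnd] <;> omega

/-- Membership of `Δ a` in `seqM Δ l`. -/
private lemma mem_seqM {Δ : ℕ → Seg} {l a : ℕ} (h1 : 1 ≤ a) (h2 : a ≤ l) :
    Δ a ∈ seqM Δ l :=
  Multiset.mem_map.mpr ⟨a, Finset.mem_val.mpr (Finset.mem_Icc.mpr ⟨h1, h2⟩), rfl⟩

/-- Lemma 7.1.3: with `Δ'` the initial sequence of `𝔪#`, assume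
`e(Δ₁) = e(Δ'₁)`, `l' ≥ i₀` and `⁺Δ'_{i₀} = Δ_{i₀}`.  Then `l' ≥ j₀` and
`⁺Δ'_i = Δ_i` for all `i₀ ≤ i ≤ j₀`. -/
theorem stmt8 (m : Multiset Seg) (hbad : BadInput m) (hne : m ≠ 0)
    (Δ : ℕ → Seg) (l : ℕ) (hseq : IsInitSeqBad m Δ l)
    (i₀ j₀ : ℕ) (hi₀ : IsMinDual Δ l i₀) (hj₀ : IsMaxDual Δ l j₀)
    (Δ' : ℕ → Seg) (l' : ℕ) (hne' : mHashBad m Δ l ≠ 0)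
    (hseq' : IsInitSeqBad (mHashBad m Δ l) Δ' l')
    (hE : (Δ 1).2 = (Δ' 1).2)
    (hl' : i₀ ≤ l') (hext : Seg.extBeg (Δ' i₀) = Δ i₀) :
    j₀ ≤ l' ∧ ∀ i, i₀ ≤ i → i ≤ j₀ → Seg.extBeg (Δ' i) = Δ i := by
  obtain ⟨⟨h1i₀, h2i₀, p, hp1, hp2, hdp⟩, hmin⟩ := hi₀
  obtain ⟨⟨h1j₀, h2j₀, q, hq1, hq2, hdq⟩, hmax⟩ := hj₀
  have hparm : ∀ Λ ∈ m, Λ.1 % 2 = (Δ 1).2 % 2 := by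
    intro Λ h
    have hw := hbad.wf Λ h
    have hp := hbad.parity Λ h (Δ 1) hseq.first_mem
    rw [hw.2]; exact hp
  have hmono := begMono hseq hparm
  have hend : ∀ j, 1 ≤ j → j ≤ l → (Δ j).2 = (Δ 1).2 - 2 * ((j : ℤ) - 1) :=
    fun j a b => (seqFacts hseq j a b).2
  have hmem' : ∀ j, 1 ≤ j → j ≤ l' → Δ' j ∈ mHashBad m Δ l :=
    fun j a b => (seqFacts hseq' j a b).1
  have hwfH := hashWF hbad hseq
  have hij : i₀ ≤ j₀ := hmax i₀ ⟨h1i₀, h2i₀, p, hp1, hp2, hdp⟩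
  have hpS : p ≤ j₀ := hmax p ⟨hp1, hp2, i₀, h1i₀, h2i₀, by rw [← hdp]; simp [Seg.dual]⟩
  have hqS : i₀ ≤ q := hmin q ⟨hq1, hq2, j₀, h1j₀, h2j₀, by rw [← hdq]; simp [Seg.dual]⟩
  have hdp1 : (Δ p).1 = -(Δ i₀).2 := by rw [← hdp]; rfl
  have hdp2 : (Δ p).2 = -(Δ i₀).1 := by rw [← hdp]; rfl
  have hdq1 : (Δ q).1 = -(Δ j₀).2 := by rw [← hdq]; rfl
  have hpj : p = j₀ := by
    have e1 := hend i₀ h1i₀ h2i₀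
    have e2 := hend p hp1 hp2
    have e3 := hend j₀ h1j₀ h2j₀
    have e4 := hmono i₀ q h1i₀ hqS hq2
    omega
  subst hpj
  have hBi₀ : (Δ i₀).1 = -(Δ 1).2 + 2 * ((p : ℤ) - 1) := by
    have := hend p h1j₀ h2j₀
    omega
  have hBp : (Δ p).1 = -(Δ 1).2 + 2 * ((i₀ : ℤ) - 1) := by
    have := hend i₀ h1i₀ h2i₀
    omega
  have hB : ∀ k, i₀ ≤ k → k ≤ p →
      (Δ k).1 = -(Δ 1).2 + 2 * ((i₀ : ℤ) + (p : ℤ) - (k : ℤ) - 1) := by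
    intro k hk1 hk2
    have m1 := hmono i₀ k h1i₀ hk1 (hk2.trans h2j₀)
    have m2 := hmono k p (h1i₀.trans hk1) hk2 h2j₀
    omega
  have he1 : (Δ' i₀).1 - 2 = (Δ i₀).1 := by rw [← hext]; rfl
  have he2 : (Δ' i₀).2 = (Δ i₀).2 := by rw [← hext]; rfl
  have hlen : (i₀ : ℤ) + (p : ℤ) ≤ (Δ 1).2 + 1 := by
    have h1 := (hwfH (Δ' i₀) (hmem' i₀ h1i₀ hl')).2.2
    have h2 := hend i₀ h1i₀ h2i₀
    omega
  have key : ∀ i, i₀ ≤ i → i ≤ p →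
      i ≤ l' ∧ (Δ' i).1 = (Δ i).1 + 2 ∧ (Δ' i).2 = (Δ i).2 := by
    intro i hi
    induction i, hi using Nat.le_induction with
    | base =>
      intro _
      exact ⟨hl', by omega, he2⟩
    | succ n hn ih =>
      intro hn1
      have hnj : n ≤ p := by omega
      obtain ⟨hnl', h1', h2'⟩ := ih hnj
      have hBn := hB n hn hnj
      have hBn1 := hB (n + 1) (by omega) hn1
      have hEn := hend n (by omega) (hnj.trans h2j₀)
      have hEn1 := hend (n + 1) (by omega) (hn1.trans h2j₀)
      have hBa := hB (i₀ + p - n - 1) (by omega) (by omega)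
      have hEa := hend (i₀ + p - n - 1) (by omega) (by omega)
      have hc1 : Seg.trimEnd (Δ n) = ((Δ (n + 1)).1 + 2, (Δ (n + 1)).2) := by
        simp only [Seg.trimEnd, Prod.mk.injEq]
        exact ⟨by omega, by omega⟩
      have hc2 : Seg.dual (Seg.trimEnd (Δ (i₀ + p - n - 1))) =
          ((Δ (n + 1)).1 + 2, (Δ (n + 1)).2) := by
        simp only [Seg.dual, Seg.trimEnd, Prod.mk.injEq]
        exact ⟨by omega, by omega⟩
      have hfilt : ((Δ (n + 1)).1 + 2 : ℤ) ≤ (Δ (n + 1)).2 := by omega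
      have hcount : 2 ≤ (mHashBad m Δ l).count ((Δ (n + 1)).1 + 2, (Δ (n + 1)).2) := by
        rw [mHashBad, Multiset.count_add,
          Multiset.count_filter_of_pos (p := fun Δ0 : Seg => Δ0.1 ≤ Δ0.2) hfilt,
          Multiset.count_add]
        have m1 : ((Δ (n + 1)).1 + 2, (Δ (n + 1)).2) ∈ (seqM Δ l).map Seg.trimEnd :=
          Multiset.mem_map.mpr ⟨Δ n, mem_seqM (by omega) (by omega), hc1⟩
        have m2 : ((Δ (n + 1)).1 + 2, (Δ (n + 1)).2) ∈
            (seqM Δ l).map fun Δ0 => Seg.dual (Seg.trimEnd Δ0) :=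
          Multiset.mem_map.mpr ⟨Δ (i₀ + p - n - 1), mem_seqM (by omega) (by omega), hc2⟩
        have c1 := Multiset.one_le_count_iff_mem.mpr m1
        have c2 := Multiset.one_le_count_iff_mem.mpr m2
        omega
      have hsucc : SuccBad (mHashBad m Δ l) Δ' n ((Δ (n + 1)).1 + 2, (Δ (n + 1)).2) := by
        refine ⟨Multiset.count_pos.mp (Nat.lt_of_lt_of_le (by norm_num) hcount), ?_, ?_,
          fun _ => hcount⟩
        · exact Or.inl (show (Δ (n + 1)).1 + 2 < (Δ' n).1 by omega)
        · show (Δ (n + 1)).2 = (Δ' n).2 - 2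
          omega
      have hnlt : n < l' := by
        rcases Nat.eq_or_lt_of_le hnl' with he | hlt
        · exact absurd (he ▸ hsucc) (hseq'.last _)
        · exact hlt
      obtain ⟨hmem1, hle1, hend1, _⟩ := hseq'.succ n (by omega) hnlt
      have hmax1 := hseq'.succ_max n (by omega) hnlt _ hsucc
      have hpar1 : (Δ' (n + 1)).1 % 2 = (Δ 1).2 % 2 := (hwfH _ hmem1).1
      have hle1' : (Δ' (n + 1)).1 < (Δ' n).1 ∨
          ((Δ' (n + 1)).1 = (Δ' n).1 ∧ (Δ' n).2 ≤ (Δ' (n + 1)).2) := hle1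
      have hmax1' : (Δ (n + 1)).1 + 2 < (Δ' (n + 1)).1 ∨
          ((Δ (n + 1)).1 + 2 = (Δ' (n + 1)).1 ∧ (Δ' (n + 1)).2 ≤ (Δ (n + 1)).2) := hmax1
      clear hcount hsucc hc1 hc2 hfilt hmem1 hle1 hmax1 hwfH hmem' hBa hEa
      exact ⟨hnlt, by omega, by omega⟩
  obtain ⟨hj₀l', _, _⟩ := key p hij le_rfl
  refine ⟨hj₀l', fun i hi1 hi2 => ?_⟩
  obtain ⟨_, k1, k2⟩ := key i hi1 hi2
  show ((Δ' i).1 - 2, (Δ' i).2) = Δ i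
  rw [Prod.ext_iff]
  exact ⟨show (Δ' i).1 - 2 = (Δ i).1 by omega, k2⟩


end AZ
end

section
/- Work in the bad-parity setting, half-integer case. Let c, n ∈ ℕ with c even, and let 𝔪 = c·[−1/2,1/2] + n·([−1/2,−1/2] + [1/2,1/2]). Then AD(𝔪) = c'·[−1/2,1/2] + n'·([−1/2,−1/2] + [1/2,1/2]), where: (1) if n is even, then c' = n and n' = c; (2) if n is odd, then c' = n − 1 and n' = c + 1. -/
namespace AZ

private def SA : Seg := (-1, 1)
private def SB : Seg := (-1, -1)
private def SC : Seg := (1, 1)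

private def M (c n : ℕ) : Multiset Seg :=
  Multiset.replicate c SA + Multiset.replicate n SB + Multiset.replicate n SC

private def ans (c n : ℕ) : Multiset Seg :=
  if Even n then
    Multiset.replicate n SA + Multiset.replicate c SB + Multiset.replicate c SC
  else
    Multiset.replicate (n - 1) SA + Multiset.replicate (c + 1) SB +
      Multiset.replicate (c + 1) SC

private lemma M_zero : M 0 0 = 0 := by simp [M]

private lemma count_repl (a b : Seg) (n : ℕ) :
    (Multiset.replicate n b).count a = if a = b then n else 0 := by
  rw [Multiset.count_replicate]
  by_cases h : a = b
  · subst h; simp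
  · rw [if_neg h, if_neg (fun hh => h hh.symm)]

private lemma count_M (c n : ℕ) (a : Seg) :
    (M c n).count a =
      (if a = SA then c else 0) + (if a = SB then n else 0) + (if a = SC then n else 0) := by
  simp [M, count_repl]

private lemma mem_M {c n : ℕ} {a : Seg} :
    a ∈ M c n ↔ (c ≠ 0 ∧ a = SA) ∨ (n ≠ 0 ∧ a = SB) ∨ (n ≠ 0 ∧ a = SC) := by
  simp [M, Multiset.mem_replicate]
  tauto

private lemma seqM_one (Δ : ℕ → Seg) : seqM Δ 1 = {Δ 1} := by
  rw [seqM, Finset.Icc_self]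
  rfl

private lemma seqM_two (Δ : ℕ → Seg) : seqM Δ 2 = {Δ 1, Δ 2} := by
  have h : (Finset.Icc 1 2 : Finset ℕ).val = {1, 2} := by decide
  rw [seqM, h]
  rfl

private lemma delta1 {c n : ℕ} {Δ : ℕ → Seg} {l : ℕ}
    (hseq : IsInitSeqBad (M c n) Δ l) :
    (n ≠ 0 ∧ Δ 1 = SC) ∨ (n = 0 ∧ c ≠ 0 ∧ Δ 1 = SA) := by
  rcases Nat.eq_zero_or_pos n with hn | hn
  · subst hn
    rcases mem_M.mp hseq.first_mem with ⟨hc, h⟩ | ⟨h, -⟩ | ⟨h, -⟩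
    · exact Or.inr ⟨rfl, hc, h⟩
    · exact absurd rfl h
    · exact absurd rfl h
  · left
    refine ⟨hn.ne', ?_⟩
    have hCmem : SC ∈ M c n := mem_M.mpr (Or.inr (Or.inr ⟨hn.ne', rfl⟩))
    have hend := hseq.first_max_end SC hCmem
    rcases mem_M.mp hseq.first_mem with ⟨-, h⟩ | ⟨-, h⟩ | ⟨-, h⟩
    · exfalso
      have hmax := hseq.first_max SC hCmem (by rw [h]; rfl)
      rw [h] at hmax
      rcases hmax with h' | ⟨h', -⟩ <;> norm_num [SA, SC, Seg.le] at h'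
    · rw [h] at hend
      norm_num [SB, SC] at hend
    · exact h

private lemma l_eq_two {c k : ℕ} {Δ : ℕ → Seg} {l : ℕ}
    (hseq : IsInitSeqBad (M c (k + 2)) Δ l) (h1 : Δ 1 = SC) :
    l = 2 ∧ Δ 2 = SB := by
  have hB : SB ∈ M c (k + 2) := mem_M.mpr (Or.inr (Or.inl ⟨by omega, rfl⟩))
  have hcnt : (M c (k + 2)).count SB = k + 2 := by
    rw [count_M, if_neg (by decide), if_pos rfl, if_neg (by decide)]
    omega
  have hsb : SuccBad (M c (k + 2)) Δ 1 SB := by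
    refine ⟨hB, ?_, ?_, ?_⟩
    · rw [h1]; left; norm_num [SB, SC]
    · rw [h1]; norm_num [SB, SC]
    · intro _; rw [hcnt]; omega
  have hone := hseq.one_le
  have hl2 : 2 ≤ l := by
    by_contra hl
    have hl1 : l = 1 := by omega
    exact hseq.last SB (hl1 ▸ hsb)
  have h2 : Δ 2 = SB := by
    have hs := hseq.succ 1 le_rfl (by omega)
    rcases mem_M.mp hs.1 with ⟨-, h⟩ | ⟨-, h⟩ | ⟨-, h⟩
    · exfalso
      have := hs.2.2.1
      rw [h, h1] at this
      norm_num [SA, SC] at this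
    · exact h
    · exfalso
      have := hs.2.2.1
      rw [h, h1] at this
      norm_num [SC] at this
  refine ⟨?_, h2⟩
  by_contra hl
  have h3 : 2 < l := by omega
  have hs := hseq.succ 2 (by omega) h3
  rcases mem_M.mp hs.1 with ⟨-, h⟩ | ⟨-, h⟩ | ⟨-, h⟩ <;>
  · have := hs.2.2.1
    rw [h, h2] at this
    norm_num [SA, SB, SC] at this

private lemma l_eq_one_n1 {c : ℕ} {Δ : ℕ → Seg} {l : ℕ}
    (hseq : IsInitSeqBad (M c 1) Δ l) (h1 : Δ 1 = SC) : l = 1 := by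
  by_contra hl
  have h2 : 1 < l := by have := hseq.one_le; omega
  have hs := hseq.succ 1 le_rfl h2
  have h2' : Δ 2 = SB := by
    rcases mem_M.mp hs.1 with ⟨-, h⟩ | ⟨-, h⟩ | ⟨-, h⟩
    · exfalso
      have := hs.2.2.1
      rw [h, h1] at this
      norm_num [SA, SC] at this
    · exact h
    · exfalso
      have := hs.2.2.1
      rw [h, h1] at this
      norm_num [SC] at this
  have hcount := hs.2.2.2 ⟨1, le_rfl, le_rfl, by rw [h2', h1]; decide⟩
  rw [h2', count_M, if_neg (by decide), if_pos rfl, if_neg (by decide)] at hcount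
  omega

private lemma l_eq_one_n0 {c : ℕ} {Δ : ℕ → Seg} {l : ℕ}
    (hseq : IsInitSeqBad (M c 0) Δ l) (h1 : Δ 1 = SA) : l = 1 := by
  by_contra hl
  have h2 : 1 < l := by have := hseq.one_le; omega
  have hs := hseq.succ 1 le_rfl h2
  rcases mem_M.mp hs.1 with ⟨-, h⟩ | ⟨h, -⟩ | ⟨h, -⟩
  · have := hs.2.2.1
    rw [h, h1] at this
    norm_num [SA] at this
  · exact h rfl
  · exact h rfl

private lemma mhash_n2 {c k : ℕ} {Δ : ℕ → Seg} (h1 : Δ 1 = SC) (h2 : Δ 2 = SB) :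
    mHashBad (M c (k + 2)) Δ 2 = M c k := by
  rw [mHashBad, seqM_two, h1, h2]
  have hmap : Multiset.map Seg.dual ({SC, SB} : Multiset Seg) = {SB, SC} := by decide
  have hfil : (Multiset.map Seg.trimEnd ({SC, SB} : Multiset Seg) +
      Multiset.map (fun Δ0 => Seg.dual (Seg.trimEnd Δ0)) ({SC, SB} : Multiset Seg)).filter
      (fun Δ0 => Δ0.1 ≤ Δ0.2) = 0 := by decide
  rw [hmap, hfil, add_zero]
  have hdec : M c (k + 2) = M c k + ({SC, SB} + {SB, SC}) := by
    have e1 : ({SC, SB} : Multiset Seg) + {SB, SC}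
        = Multiset.replicate 2 SB + Multiset.replicate 2 SC := by decide
    rw [e1, M, M, Multiset.replicate_add, Multiset.replicate_add]
    abel
  rw [hdec, add_tsub_cancel_right]

private lemma mhash_n1 {c : ℕ} {Δ : ℕ → Seg} (h1 : Δ 1 = SC) :
    mHashBad (M c 1) Δ 1 = M c 0 := by
  rw [mHashBad, seqM_one, h1]
  have hmap : Multiset.map Seg.dual ({SC} : Multiset Seg) = {SB} := by decide
  have hfil : (Multiset.map Seg.trimEnd ({SC} : Multiset Seg) +
      Multiset.map (fun Δ0 => Seg.dual (Seg.trimEnd Δ0)) ({SC} : Multiset Seg)).filter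
      (fun Δ0 => Δ0.1 ≤ Δ0.2) = 0 := by decide
  rw [hmap, hfil, add_zero]
  have hdec : M c 1 = M c 0 + ({SC} + {SB}) := by
    simp only [M, Multiset.replicate_one, Multiset.replicate_zero, add_zero]
    have e1 : ({SC} : Multiset Seg) + {SB} = {SB} + {SC} := by decide
    rw [e1]
    abel
  rw [hdec, add_tsub_cancel_right]

private lemma mhash_n0 {c : ℕ} {Δ : ℕ → Seg} (h1 : Δ 1 = SA) :
    mHashBad (M (c + 2) 0) Δ 1 = M c 1 := by
  rw [mHashBad, seqM_one, h1]
  have hmap : Multiset.map Seg.dual ({SA} : Multiset Seg) = {SA} := by decide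
  have hfil : (Multiset.map Seg.trimEnd ({SA} : Multiset Seg) +
      Multiset.map (fun Δ0 => Seg.dual (Seg.trimEnd Δ0)) ({SA} : Multiset Seg)).filter
      (fun Δ0 => Δ0.1 ≤ Δ0.2) = ({SB} + {SC}) := by decide
  rw [hmap, hfil]
  have hdec : M (c + 2) 0 = Multiset.replicate c SA + ({SA} + {SA}) := by
    simp only [M, Multiset.replicate_add, Multiset.replicate_zero, add_zero]
    have e1 : Multiset.replicate 2 SA = {SA} + {SA} := rfl
    rw [e1]
  rw [hdec, add_tsub_cancel_right]
  simp only [M, Multiset.replicate_one]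
  abel

private lemma final_n2 {c k : ℕ} {Δ : ℕ → Seg} (h1 : Δ 1 = SC) (h2 : Δ 2 = SB) :
    mOneBad Δ 2 + ans c k = ans c (k + 2) := by
  have hm1 : mOneBad Δ 2 = {SA, SA} := by rw [mOneBad, h1, h2]; decide
  rw [hm1]
  rcases Nat.even_or_odd k with hk | hk
  · rw [ans, ans, if_pos hk, if_pos (by rcases hk with ⟨t, ht⟩; exact ⟨t + 1, by omega⟩)]
    ext a
    simp only [Multiset.insert_eq_cons, Multiset.count_add, Multiset.count_cons,
      Multiset.count_singleton, count_repl]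
    split_ifs <;> (try simp_all [SA, SB, SC, Prod.ext_iff]) <;> omega
  · have hk1 : 1 ≤ k := hk.pos
    have hke : ¬ Even k := Nat.not_even_iff_odd.mpr hk
    have hke2 : ¬ Even (k + 2) := by
      intro h
      exact hke (by rcases h with ⟨t, ht⟩; exact ⟨t - 1, by omega⟩)
    rw [ans, ans, if_neg hke, if_neg hke2]
    ext a
    simp only [Multiset.insert_eq_cons, Multiset.count_add, Multiset.count_cons,
      Multiset.count_singleton, count_repl]
    split_ifs <;> (try simp_all [SA, SB, SC, Prod.ext_iff]) <;> omega

private lemma final_n1 {c : ℕ} {Δ : ℕ → Seg} (h1 : Δ 1 = SC) :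
    mOneBad Δ 1 + ans c 0 = ans c 1 := by
  have hm1 : mOneBad Δ 1 = {SC, SB} := by rw [mOneBad, h1]; decide
  rw [hm1, ans, ans, if_pos (by decide : Even 0), if_neg (by decide : ¬ Even 1)]
  ext a
  simp only [Multiset.insert_eq_cons, Multiset.count_add, Multiset.count_cons,
    Multiset.count_singleton, count_repl]
  split_ifs <;> (try simp_all [SA, SB, SC, Prod.ext_iff]) <;> omega

private lemma final_n0 {c : ℕ} {Δ : ℕ → Seg} (h1 : Δ 1 = SA) :
    mOneBad Δ 1 + ans c 1 = ans (c + 2) 0 := by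
  have hm1 : mOneBad Δ 1 = {SC, SB} := by rw [mOneBad, h1]; decide
  rw [hm1, ans, ans, if_pos (by decide : Even 0), if_neg (by decide : ¬ Even 1)]
  ext a
  simp only [Multiset.insert_eq_cons, Multiset.count_add, Multiset.count_cons,
    Multiset.count_singleton, count_repl]
  split_ifs <;> (try simp_all [SA, SB, SC, Prod.ext_iff]) <;> omega

private lemma key : ∀ N c n d, 10 * c + n ≤ N → Even c → IsADBad (M c n) d → d = ans c n := by
  intro N
  induction N with
  | zero =>
    intro c n d hle hc had
    have hc0 : c = 0 := by omega
    have hn0 : n = 0 := by omega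
    subst hc0; subst hn0
    rw [M_zero] at had
    cases had with
    | zero => simp [ans]
    | step hm hseq hrec => exact absurd rfl hm
  | succ N ih =>
    intro c n d hle hc had
    generalize hM : M c n = m0 at had
    cases had with
    | zero =>
      have hcard : c + (n + n) = 0 := by
        have h := congrArg Multiset.card hM
        simpa [M] using h
      have hc0 : c = 0 := by omega
      have hn0 : n = 0 := by omega
      subst hc0; subst hn0
      simp [ans]
    | step hm hseq hrec =>
      rename_i Δ l d'
      subst hM
      cases n with
      | zero =>
        have hc0 : c ≠ 0 := by rintro rfl; exact hm M_zero
        rcases delta1 hseq with ⟨h, -⟩ | ⟨-, -, h1⟩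
        · exact absurd rfl h
        obtain ⟨c', rfl⟩ : ∃ c', c = c' + 2 := by
          rcases hc with ⟨t, ht⟩
          exact ⟨c - 2, by omega⟩
        have hl := l_eq_one_n0 hseq h1
        subst hl
        rw [mhash_n0 h1] at hrec
        have hc' : Even c' := by rcases hc with ⟨t, ht⟩; exact ⟨t - 1, by omega⟩
        have hd' := ih c' 1 _ (by omega) hc' hrec
        rw [hd']
        exact final_n0 h1
      | succ n1 =>
        cases n1 with
        | zero =>
          rcases delta1 hseq with ⟨-, h1⟩ | ⟨h, -⟩
          · have hl := l_eq_one_n1 hseq h1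
            subst hl
            rw [mhash_n1 h1] at hrec
            have hd' := ih c 0 _ (by omega) hc hrec
            rw [hd']
            exact final_n1 h1
          · exact absurd h (by omega)
        | succ k =>
          rcases delta1 hseq with ⟨-, h1⟩ | ⟨h, -⟩
          · obtain ⟨hl, h2⟩ := l_eq_two hseq h1
            subst hl
            rw [mhash_n2 h1 h2] at hrec
            have hd' := ih c k _ (by omega) hc hrec
            rw [hd']
            exact final_n2 h1 h2
          · exact absurd h (by omega)

/-- Proposition 11.2.1: explicit computation of the bad-parity
dual of `𝔪 = c·[−1/2,1/2] + n·([−1/2,−1/2] + [1/2,1/2])`, `c` even. -/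
theorem stmt18 (c n : ℕ) (hc : Even c) (d : Multiset Seg)
    (had : IsADBad
      (Multiset.replicate c (((-1 : ℤ), (1 : ℤ)) : Seg) +
        Multiset.replicate n (((-1 : ℤ), (-1 : ℤ)) : Seg) +
        Multiset.replicate n (((1 : ℤ), (1 : ℤ)) : Seg))
      d) :
    (Even n →
      d = Multiset.replicate n (((-1 : ℤ), (1 : ℤ)) : Seg) +
        Multiset.replicate c (((-1 : ℤ), (-1 : ℤ)) : Seg) +
        Multiset.replicate c (((1 : ℤ), (1 : ℤ)) : Seg)) ∧
    (Odd n →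
      d = Multiset.replicate (n - 1) (((-1 : ℤ), (1 : ℤ)) : Seg) +
        Multiset.replicate (c + 1) (((-1 : ℤ), (-1 : ℤ)) : Seg) +
        Multiset.replicate (c + 1) (((1 : ℤ), (1 : ℤ)) : Seg)) := by
  have hd : d = ans c n := key (10 * c + n) c n d le_rfl hc had
  constructor
  · intro hn
    rw [hd, ans, if_pos hn]
    rfl
  · intro hn
    rw [hd, ans, if_neg (Nat.not_even_iff_odd.mpr hn)]
    rfl

end AZ
end
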